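/- The well-scoped λ-term container carries an ICMS: with shapes S : ℕ → Set the inductive family generated by var : S n, app : S n → S n → S n, lam : S (n+1) → S n, and positions P n var m := (n = m), P n (app M N) m := P n M m ⊕ P n N m, P n (lam M) m := P (n+1) M m, the operations e := var; var • σ := σ n refl; (app M N) • σ := app (M • (inl ; σ)) (N • (inr ; σ)); (lam M) • σ := lam (M • σ); together with Pe≡ p := p and ↑, ↖, ↗ defined by structural recursion on the shape (↑ over var is n; over app and lam it recurses; ↖ over var is refl, over app it wraps with inl/inr; ↗ over var p is p) satisfy all ICMS unit and associativity equations. -/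

import Mathlib

/-- An `I`-indexed container `S ◁ P`. -/
structure ICont (I : Type) where
  S : I → Type
  P : (i : I) → S i → I → Type

variable {I : Type}

/-- The extent `⟦S ◁ P⟧ X i := Σ s : S i, ∀ j, P i s j → X j`. -/
def IExt (C : ICont I) (X : I → Type) (i : I) : Type :=
  Σ s : C.S i, ∀ j, C.P i s j → X j

/-- Functorial action of the extent on maps of families. -/
def iExtMap (C : ICont I) {X Y : I → Type} (h : ∀ i, X i → Y i) (i : I) :
    IExt C X i → IExt C Y i :=
  fun x => ⟨x.1, fun j p => h j (x.2 j p)⟩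

/-- A morphism of indexed containers, in its `(σ, π)` form. -/
structure ICHom (C D : ICont I) where
  σ : ∀ i, C.S i → D.S i
  π : ∀ (i : I) (s : C.S i) (j : I), D.P i (σ i s) j → C.P i s j

/-- The natural transformation `⟦f⟧` induced by a container morphism. -/
def ICHom.extNat {C D : ICont I} (f : ICHom C D) (X : I → Type) (i : I) :
    IExt C X i → IExt D X i :=
  fun x => ⟨f.σ i x.1, fun j p' => x.2 j (f.π i x.1 j p')⟩

/-- The identity container morphism. -/
def ICHom.id (C : ICont I) : ICHom C C :=
  ⟨fun _ s => s, fun _ _ _ p => p⟩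

/-- Composition of container morphisms (diagrammatic order). -/
def ICHom.comp {C D E : ICont I} (f : ICHom C D) (g : ICHom D E) : ICHom C E :=
  ⟨fun i s => g.σ i (f.σ i s), fun i s j p => f.π i s j (g.π i (f.σ i s) j p)⟩

/-- The identity container: shapes `Unit`, positions at `(i, ⋆, j)` given by `i = j`. -/
def idC (I : Type) : ICont I :=
  ⟨fun _ => Unit, fun i _ j => PLift (i = j)⟩

/-- The composite (tensorIC) container. -/
def tensorIC (C D : ICont I) : ICont I :=
  ⟨fun i => IExt C D.S i,
   fun i ss k => Σ j : I, Σ p : C.P i ss.1 j, D.P j (ss.2 j p) k⟩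

/-- The data of an indexed container monoid structure (ICMS). -/
structure ICMSData {I : Type} (C : ICont I) where
  e : ∀ i, C.S i
  mul : ∀ (i : I) (s : C.S i), (∀ j, C.P i s j → C.S j) → C.S i
  Pe : ∀ (i j : I), C.P i (e i) j → i = j
  up : ∀ (i : I) (s : C.S i) (s' : ∀ j, C.P i s j → C.S j) (j : I),
    C.P i (mul i s s') j → I
  ul : ∀ (i : I) (s : C.S i) (s' : ∀ j, C.P i s j → C.S j) (j : I)
    (p : C.P i (mul i s s') j), C.P i s (up i s s' j p)
  ur : ∀ (i : I) (s : C.S i) (s' : ∀ j, C.P i s j → C.S j) (j : I)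
    (p : C.P i (mul i s s') j),
    C.P (up i s s' j p) (s' (up i s s' j p) (ul i s s' j p)) j

namespace ICMSData

variable {I : Type} {C : ICont I} (D : ICMSData C)

/-- The constant-unit family `e^P`. -/
def eP {i : I} (s : C.S i) : ∀ j, C.P i s j → C.S j := fun j _ => D.e j

/-- The constant family `s̄` over unit positions (transported along `Pe`). -/
def sbar {i : I} (s : C.S i) : ∀ j, C.P i (D.e i) j → C.S j :=
  fun j p => D.Pe i j p ▸ s

/-- Pointwise multiplication `s' •^P s''`. -/
def mulP {i : I} (s : C.S i) (s' : ∀ j, C.P i s j → C.S j)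
    (s'' : ∀ (k : I) (q : C.P i s k) (l : I), C.P k (s' k q) l → C.S l) :
    ∀ k, C.P i s k → C.S k :=
  fun k q => D.mul k (s' k q) (s'' k q)

/-- The reassociated family `⟨s''⟩`. -/
def smoosh {i : I} (s : C.S i) (s' : ∀ j, C.P i s j → C.S j)
    (s'' : ∀ (k : I) (q : C.P i s k) (l : I), C.P k (s' k q) l → C.S l) :
    ∀ l, C.P i (D.mul i s s') l → C.S l :=
  fun l r => s'' (D.up i s s' l r) (D.ul i s s' l r) l (D.ur i s s' l r)

end ICMSData

/-- The equations of an indexed container monoid structure. Some of the equations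
are heterogeneous; they are stated using `HEq`, quantifying over a transported
position `p₂` heterogeneously equal to `p`. -/
structure ICMSLaws {I : Type} (C : ICont I) (D : ICMSData C) : Prop where
  e_unit_l : ∀ (i : I) (s : C.S i), D.mul i s (D.eP s) = s
  ul_unit_l : ∀ (i : I) (s : C.S i) (j : I) (p : C.P i (D.mul i s (D.eP s)) j),
    HEq (D.ul i s (D.eP s) j p) p
  e_unit_r : ∀ (i : I) (s : C.S i), D.mul i (D.e i) (D.sbar s) = s
  ur_unit_r : ∀ (i : I) (s : C.S i) (j : I)
    (p : C.P i (D.mul i (D.e i) (D.sbar s)) j),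
    HEq (D.ur i (D.e i) (D.sbar s) j p) p
  mul_assoc : ∀ (i : I) (s : C.S i) (s' : ∀ j, C.P i s j → C.S j)
    (s'' : ∀ (k : I) (q : C.P i s k) (l : I), C.P k (s' k q) l → C.S l),
    D.mul i (D.mul i s s') (D.smoosh s s' s'') = D.mul i s (D.mulP s s' s'')
  up_assoc : ∀ (i : I) (s : C.S i) (s' : ∀ j, C.P i s j → C.S j)
    (s'' : ∀ (k : I) (q : C.P i s k) (l : I), C.P k (s' k q) l → C.S l) (j : I)
    (p : C.P i (D.mul i (D.mul i s s') (D.smoosh s s' s'')) j)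
    (p₂ : C.P i (D.mul i s (D.mulP s s' s'')) j), HEq p p₂ →
    D.up i (D.mul i s s') (D.smoosh s s' s'') j p =
      D.up (D.up i s (D.mulP s s' s'') j p₂)
        (s' (D.up i s (D.mulP s s' s'') j p₂) (D.ul i s (D.mulP s s' s'') j p₂))
        (s'' (D.up i s (D.mulP s s' s'') j p₂) (D.ul i s (D.mulP s s' s'') j p₂)) j
        (D.ur i s (D.mulP s s' s'') j p₂)
  ulup_up_assoc : ∀ (i : I) (s : C.S i) (s' : ∀ j, C.P i s j → C.S j)
    (s'' : ∀ (k : I) (q : C.P i s k) (l : I), C.P k (s' k q) l → C.S l) (j : I)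
    (p : C.P i (D.mul i (D.mul i s s') (D.smoosh s s' s'')) j)
    (p₂ : C.P i (D.mul i s (D.mulP s s' s'')) j), HEq p p₂ →
    D.up i s s' (D.up i (D.mul i s s') (D.smoosh s s' s'') j p)
        (D.ul i (D.mul i s s') (D.smoosh s s' s'') j p) =
      D.up i s (D.mulP s s' s'') j p₂
  ulul_ul_assoc : ∀ (i : I) (s : C.S i) (s' : ∀ j, C.P i s j → C.S j)
    (s'' : ∀ (k : I) (q : C.P i s k) (l : I), C.P k (s' k q) l → C.S l) (j : I)
    (p : C.P i (D.mul i (D.mul i s s') (D.smoosh s s' s'')) j)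
    (p₂ : C.P i (D.mul i s (D.mulP s s' s'')) j), HEq p p₂ →
    HEq (D.ul i s s' (D.up i (D.mul i s s') (D.smoosh s s' s'') j p)
          (D.ul i (D.mul i s s') (D.smoosh s s' s'') j p))
        (D.ul i s (D.mulP s s' s'') j p₂)
  ulur_urul_assoc : ∀ (i : I) (s : C.S i) (s' : ∀ j, C.P i s j → C.S j)
    (s'' : ∀ (k : I) (q : C.P i s k) (l : I), C.P k (s' k q) l → C.S l) (j : I)
    (p : C.P i (D.mul i (D.mul i s s') (D.smoosh s s' s'')) j)
    (p₂ : C.P i (D.mul i s (D.mulP s s' s'')) j), HEq p p₂ →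
    HEq (D.ur i s s' (D.up i (D.mul i s s') (D.smoosh s s' s'') j p)
          (D.ul i (D.mul i s s') (D.smoosh s s' s'') j p))
        (D.ul (D.up i s (D.mulP s s' s'') j p₂)
          (s' (D.up i s (D.mulP s s' s'') j p₂) (D.ul i s (D.mulP s s' s'') j p₂))
          (s'' (D.up i s (D.mulP s s' s'') j p₂) (D.ul i s (D.mulP s s' s'') j p₂)) j
          (D.ur i s (D.mulP s s' s'') j p₂))
  ur_urur_assoc : ∀ (i : I) (s : C.S i) (s' : ∀ j, C.P i s j → C.S j)
    (s'' : ∀ (k : I) (q : C.P i s k) (l : I), C.P k (s' k q) l → C.S l) (j : I)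
    (p : C.P i (D.mul i (D.mul i s s') (D.smoosh s s' s'')) j)
    (p₂ : C.P i (D.mul i s (D.mulP s s' s'')) j), HEq p p₂ →
    HEq (D.ur i (D.mul i s s') (D.smoosh s s' s'') j p)
        (D.ur (D.up i s (D.mulP s s' s'') j p₂)
          (s' (D.up i s (D.mulP s s' s'') j p₂) (D.ul i s (D.mulP s s' s'') j p₂))
          (s'' (D.up i s (D.mulP s s' s'') j p₂) (D.ul i s (D.mulP s s' s'') j p₂)) j
          (D.ur i s (D.mulP s s' s'') j p₂))

/-- An indexed container monoid structure: data together with the laws. -/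
structure ICMS {I : Type} (C : ICont I) where
  data : ICMSData C
  laws : ICMSLaws C data

/-- Shapes of the well-scoped λ-term container: an inductive family over ℕ. -/
inductive Tm : ℕ → Type where
  | var : ∀ {n}, Tm n
  | app : ∀ {n}, Tm n → Tm n → Tm n
  | lam : ∀ {n}, Tm (n + 1) → Tm n

/-- Positions, defined by recursion on the shape. -/
def Pos : ∀ {n : ℕ}, Tm n → ℕ → Type
  | n, .var, m => PLift (n = m)
  | _, .app M N, m => Pos M m ⊕ Pos N m
  | _, .lam M, m => Pos M m

/-- Shape substitution (the multiplication on shapes). -/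
def subst : ∀ {n : ℕ} (M : Tm n), (∀ m, Pos M m → Tm m) → Tm n
  | n, .var, σ => σ n ⟨rfl⟩
  | _, .app M N, σ =>
      .app (subst M (fun m p => σ m (.inl p))) (subst N (fun m p => σ m (.inr p)))
  | _, .lam M, σ => .lam (subst M σ)

/-- The index `↑ p` of the outer position, by structural recursion on the shape. -/
def upT : ∀ {n : ℕ} (M : Tm n) (σ : ∀ m, Pos M m → Tm m) (j : ℕ),
    Pos (subst M σ) j → ℕ
  | n, .var, _, _, _ => n
  | _, .app M N, σ, j, p =>
      match p with
      | .inl p => upT M (fun m p => σ m (.inl p)) j p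
      | .inr p => upT N (fun m p => σ m (.inr p)) j p
  | _, .lam M, σ, j, p => upT M σ j p

/-- The outer position `↖ p`. -/
def ulT : ∀ {n : ℕ} (M : Tm n) (σ : ∀ m, Pos M m → Tm m) (j : ℕ)
    (p : Pos (subst M σ) j), Pos M (upT M σ j p)
  | _, .var, _, _, _ => ⟨rfl⟩
  | _, .app M N, σ, j, p =>
      match p with
      | .inl p => .inl (ulT M (fun m p => σ m (.inl p)) j p)
      | .inr p => .inr (ulT N (fun m p => σ m (.inr p)) j p)
  | _, .lam M, σ, j, p => ulT M σ j p

/-- The inner position `↗ p`. -/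
def urT : ∀ {n : ℕ} (M : Tm n) (σ : ∀ m, Pos M m → Tm m) (j : ℕ)
    (p : Pos (subst M σ) j), Pos (σ (upT M σ j p) (ulT M σ j p)) j
  | _, .var, _, _, p => p
  | _, .app M N, σ, j, p =>
      match p with
      | .inl p => urT M (fun m p => σ m (.inl p)) j p
      | .inr p => urT N (fun m p => σ m (.inr p)) j p
  | _, .lam M, σ, j, p => urT M σ j p

/-- The well-scoped λ-term container. -/
def lamCont : ICont ℕ := ⟨Tm, fun _ M m => Pos M m⟩

/-- The ICMS data on the well-scoped λ-term container. -/
def lamData : ICMSData lamCont where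
  e _ := .var
  mul _ M σ := subst M σ
  Pe _ _ p := p.down
  up _ M σ j p := upT M σ j p
  ul _ M σ j p := ulT M σ j p
  ur _ M σ j p := urT M σ j p

section Aux

private lemma heq_inl_congr {α α' β β' : Type} (hα : α = α') (hβ : β = β')
    {a : α} {b : α'} (h : HEq a b) :
    HEq (Sum.inl (β := β) a) (Sum.inl (β := β') b) := by
  subst hα; subst hβ; cases h; rfl

private lemma heq_inr_congr {α α' β β' : Type} (hα : α = α') (hβ : β = β')
    {a : β} {b : β'} (h : HEq a b) :
    HEq (Sum.inr (α := α) a) (Sum.inr (α := α') b) := by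
  subst hα; subst hβ; cases h; rfl

private lemma heq_inl_inj {α α' β β' : Type} (hα : α = α') (hβ : β = β')
    {a : α} {b : α'} (h : HEq (Sum.inl (β := β) a) (Sum.inl (β := β') b)) :
    HEq a b := by
  subst hα; subst hβ; cases Sum.inl.inj (eq_of_heq h); rfl

private lemma heq_inr_inj {α α' β β' : Type} (hα : α = α') (hβ : β = β')
    {a : β} {b : β'} (h : HEq (Sum.inr (α := α) a) (Sum.inr (α := α') b)) :
    HEq a b := by
  subst hα; subst hβ; cases Sum.inr.inj (eq_of_heq h); rfl

private lemma heq_inl_inr {α α' β β' : Type} (hα : α = α') (hβ : β = β')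
    {a : α} {b : β'} (h : HEq (Sum.inl (β := β) a) (Sum.inr (α := α') b)) :
    False := by
  subst hα; subst hβ; cases eq_of_heq h

private lemma heq_inr_inl {α α' β β' : Type} (hα : α = α') (hβ : β = β')
    {a : β} {b : α'} (h : HEq (Sum.inr (α := α) a) (Sum.inl (β := β') b)) :
    False := by
  subst hα; subst hβ; cases eq_of_heq h

/-- Unit law on shapes: substituting the constant-variable family is the identity. -/
lemma subst_var : ∀ {n : ℕ} (M : Tm n), subst M (fun _ _ => .var) = M
  | _, .var => rfl
  | _, .app M N => congrArg₂ Tm.app (subst_var M) (subst_var N)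
  | _, .lam M => congrArg Tm.lam (subst_var M)

/-- The `up` index for the unit substitution is the target index. -/
lemma upT_var : ∀ {n : ℕ} (M : Tm n) (j : ℕ)
    (p : Pos (subst M (fun _ _ => .var)) j), upT M (fun _ _ => .var) j p = j
  | _, .var, _, p => p.down
  | _, .app M N, j, p => by
      cases p with
      | inl p => exact upT_var M j p
      | inr p => exact upT_var N j p
  | _, .lam M, j, p => upT_var M j p

/-- The `↖` position for the unit substitution is heterogeneously the original. -/
lemma ulT_var : ∀ {n : ℕ} (M : Tm n) (j : ℕ)
    (p : Pos (subst M (fun _ _ => .var)) j),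
    HEq (ulT M (fun _ _ => .var) j p) p
  | _, .var, j, p => by cases p with | up h => cases h; rfl
  | _, .app M N, j, p => by
      cases p with
      | inl p =>
          exact heq_inl_congr
            ((congrArg (Pos M) (upT_var M j p)).trans
              (congrArg (fun t => Pos t j) (subst_var M)).symm)
            ((congrArg (Pos N) (upT_var M j p)).trans
              (congrArg (fun t => Pos t j) (subst_var N)).symm)
            (ulT_var M j p)
      | inr p =>
          exact heq_inr_congr
            ((congrArg (Pos M) (upT_var N j p)).trans
              (congrArg (fun t => Pos t j) (subst_var M)).symm)
            ((congrArg (Pos N) (upT_var N j p)).trans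
              (congrArg (fun t => Pos t j) (subst_var N)).symm)
            (ulT_var N j p)
  | _, .lam M, j, p => ulT_var M j p

section Assoc

variable {n : ℕ}

/-- Associativity on shapes. -/
lemma subst_assoc : ∀ {n : ℕ} (M : Tm n) (σ : ∀ m, Pos M m → Tm m)
    (τ : ∀ k (q : Pos M k) l, Pos (σ k q) l → Tm l),
    subst (subst M σ) (fun l r => τ (upT M σ l r) (ulT M σ l r) l (urT M σ l r)) =
      subst M (fun k q => subst (σ k q) (τ k q))
  | _, .var, _, _ => rfl
  | _, .app M N, σ, τ =>
      congrArg₂ Tm.app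
        (subst_assoc M (fun m p => σ m (.inl p)) (fun k q => τ k (.inl q)))
        (subst_assoc N (fun m p => σ m (.inr p)) (fun k q => τ k (.inr q)))
  | _, .lam M, σ, τ => congrArg Tm.lam (subst_assoc M σ τ)

/-- All five position coherences for associativity, proved simultaneously by
structural induction on the shape. -/
lemma pos_assoc : ∀ {n : ℕ} (M : Tm n) (σ : ∀ m, Pos M m → Tm m)
    (τ : ∀ k (q : Pos M k) l, Pos (σ k q) l → Tm l) (j : ℕ)
    (p : Pos (subst (subst M σ)
      (fun l r => τ (upT M σ l r) (ulT M σ l r) l (urT M σ l r))) j)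
    (p₂ : Pos (subst M (fun k q => subst (σ k q) (τ k q))) j), HEq p p₂ →
    (upT (subst M σ) (fun l r => τ (upT M σ l r) (ulT M σ l r) l (urT M σ l r)) j p =
      upT (σ (upT M (fun k q => subst (σ k q) (τ k q)) j p₂)
            (ulT M (fun k q => subst (σ k q) (τ k q)) j p₂))
          (τ (upT M (fun k q => subst (σ k q) (τ k q)) j p₂)
            (ulT M (fun k q => subst (σ k q) (τ k q)) j p₂)) j
          (urT M (fun k q => subst (σ k q) (τ k q)) j p₂)) ∧
    (upT M σ
        (upT (subst M σ) (fun l r => τ (upT M σ l r) (ulT M σ l r) l (urT M σ l r)) j p)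
        (ulT (subst M σ) (fun l r => τ (upT M σ l r) (ulT M σ l r) l (urT M σ l r)) j p) =
      upT M (fun k q => subst (σ k q) (τ k q)) j p₂) ∧
    HEq (ulT M σ
        (upT (subst M σ) (fun l r => τ (upT M σ l r) (ulT M σ l r) l (urT M σ l r)) j p)
        (ulT (subst M σ) (fun l r => τ (upT M σ l r) (ulT M σ l r) l (urT M σ l r)) j p))
      (ulT M (fun k q => subst (σ k q) (τ k q)) j p₂) ∧
    HEq (urT M σ
        (upT (subst M σ) (fun l r => τ (upT M σ l r) (ulT M σ l r) l (urT M σ l r)) j p)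
        (ulT (subst M σ) (fun l r => τ (upT M σ l r) (ulT M σ l r) l (urT M σ l r)) j p))
      (ulT (σ (upT M (fun k q => subst (σ k q) (τ k q)) j p₂)
            (ulT M (fun k q => subst (σ k q) (τ k q)) j p₂))
          (τ (upT M (fun k q => subst (σ k q) (τ k q)) j p₂)
            (ulT M (fun k q => subst (σ k q) (τ k q)) j p₂)) j
          (urT M (fun k q => subst (σ k q) (τ k q)) j p₂)) ∧
    HEq (urT (subst M σ)
        (fun l r => τ (upT M σ l r) (ulT M σ l r) l (urT M σ l r)) j p)
      (urT (σ (upT M (fun k q => subst (σ k q) (τ k q)) j p₂)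
            (ulT M (fun k q => subst (σ k q) (τ k q)) j p₂))
          (τ (upT M (fun k q => subst (σ k q) (τ k q)) j p₂)
            (ulT M (fun k q => subst (σ k q) (τ k q)) j p₂)) j
          (urT M (fun k q => subst (σ k q) (τ k q)) j p₂))
  | _, .var, σ, τ, j, p, p₂, h => by
      cases eq_of_heq h
      exact ⟨rfl, rfl, HEq.rfl, HEq.rfl, HEq.rfl⟩
  | _, .app M N, σ, τ, j, p, p₂, h => by
      have eL := subst_assoc M (fun m p => σ m (.inl p)) (fun k q => τ k (.inl q))
      have eR := subst_assoc N (fun m p => σ m (.inr p)) (fun k q => τ k (.inr q))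
      cases p with
      | inl p =>
          cases p₂ with
          | inl p₂ =>
              have ha : HEq p p₂ := heq_inl_inj (congrArg (fun t => Pos t j) eL) (congrArg (fun t => Pos t j) eR) h
              obtain ⟨h1, h2, h3, h4, h5⟩ :=
                pos_assoc M (fun m p => σ m (.inl p)) (fun k q => τ k (.inl q)) j p p₂ ha
              exact ⟨h1, h2, heq_inl_congr (congrArg (Pos M) h2) (congrArg (Pos N) h2) h3, h4, h5⟩
          | inr p₂ => exact absurd (heq_inl_inr (congrArg (fun t => Pos t j) eL) (congrArg (fun t => Pos t j) eR) h) not_false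
      | inr p =>
          cases p₂ with
          | inl p₂ => exact absurd (heq_inr_inl (congrArg (fun t => Pos t j) eL) (congrArg (fun t => Pos t j) eR) h) not_false
          | inr p₂ =>
              have ha : HEq p p₂ := heq_inr_inj (congrArg (fun t => Pos t j) eL) (congrArg (fun t => Pos t j) eR) h
              obtain ⟨h1, h2, h3, h4, h5⟩ :=
                pos_assoc N (fun m p => σ m (.inr p)) (fun k q => τ k (.inr q)) j p p₂ ha
              exact ⟨h1, h2, heq_inr_congr (congrArg (Pos M) h2) (congrArg (Pos N) h2) h3, h4, h5⟩
  | _, .lam M, σ, τ, j, p, p₂, h => pos_assoc M σ τ j p p₂ h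

end Assoc

end Aux

/-- the well-scoped λ-term container carries an ICMS. -/
theorem scoped_lambda_icms : ICMSLaws lamCont lamData :=
  { e_unit_l := fun _ s => subst_var s
    ul_unit_l := fun _ s j p => ulT_var s j p
    e_unit_r := fun _ _ => rfl
    ur_unit_r := fun _ _ _ _ => HEq.rfl
    mul_assoc := fun _ s s' s'' => subst_assoc s s' s''
    up_assoc := fun _ s s' s'' j p p₂ h => (pos_assoc s s' s'' j p p₂ h).1
    ulup_up_assoc := fun _ s s' s'' j p p₂ h => (pos_assoc s s' s'' j p p₂ h).2.1
    ulul_ul_assoc := fun _ s s' s'' j p p₂ h => (pos_assoc s s' s'' j p p₂ h).2.2.1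
    ulur_urul_assoc := fun _ s s' s'' j p p₂ h => (pos_assoc s s' s'' j p p₂ h).2.2.2.1
    ur_urur_assoc := fun _ s s' s'' j p p₂ h => (pos_assoc s s' s'' j p p₂ h).2.2.2.2 }
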